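/- Suppose F = α + a + *b + *β is a C¹ multivector field on an open Ω ⊆ ℝ³ satisfying the Dirac equation DF = ikF with k ∈ ℂ. Then the scalar and 3-vector parts vanish identically (α = 0 and β = 0) if and only if F satisfies dF = ik T⁺F, where dF = e₁∧∂₁F + e₂∧∂₂F + e₃∧∂₃F is the exterior derivative and T⁺F = ½(F + F̂) is the even-grade (spacelike) part. -/

import Mathlib

noncomputable section

/-- Complex Euclidean dot product (bilinear extension) on `ℂ³`. -/
def cdot (u v : Fin 3 → ℂ) : ℂ := u 0 * v 0 + u 1 * v 1 + u 2 * v 2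

/-- Bilinear extension of the cross product to `ℂ³`. -/
def ccross (u v : Fin 3 → ℂ) : Fin 3 → ℂ :=
  ![u 1 * v 2 - u 2 * v 1, u 2 * v 0 - u 0 * v 2, u 0 * v 1 - u 1 * v 0]

/-- The eight-dimensional complex Clifford algebra `Cl(ℂ³)` of `ℝ³`, identified
as a linear space with `∧ℂ³`: a multivector is `w = α + a + *b + *β` with
scalar part `α`, vector part `a`, bivector part `*b` and 3-vector part `*β`. -/
structure Cl3 where
  α : ℂ
  a : Fin 3 → ℂ
  b : Fin 3 → ℂ
  β : ℂ

instance : Zero Cl3 := ⟨⟨0, 0, 0, 0⟩⟩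
instance : One Cl3 := ⟨⟨1, 0, 0, 0⟩⟩
instance : Add Cl3 := ⟨fun x y => ⟨x.α + y.α, x.a + y.a, x.b + y.b, x.β + y.β⟩⟩
instance : Neg Cl3 := ⟨fun x => ⟨-x.α, -x.a, -x.b, -x.β⟩⟩
instance : Sub Cl3 := ⟨fun x y => x + -y⟩
instance : SMul ℂ Cl3 := ⟨fun c x => ⟨c * x.α, c • x.a, c • x.b, c * x.β⟩⟩

/-- The Clifford product on `∧ℂ³`, with the convention `u u = |u|²` for
vectors `u`.  It is determined by the product of a vector with a multivector,
`u w = u·a + (uα − u×b) + *(u×a + uβ) + *(u·b)` for `w = α + a + *b + *β`. -/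
instance : Mul Cl3 := ⟨fun x y =>
  ⟨x.α * y.α + cdot x.a y.a - cdot x.b y.b - x.β * y.β,
   x.α • y.a + y.α • x.a - ccross x.a y.b - ccross x.b y.a - y.β • x.b - x.β • y.b,
   x.α • y.b + y.α • x.b + ccross x.a y.a - ccross x.b y.b + x.β • y.a + y.β • x.a,
   x.α * y.β + x.β * y.α + cdot x.a y.b + cdot x.b y.a⟩⟩

/-- The embedding of real vectors `ℝ³ ⊂ Cl(ℂ³)`. -/
def vec (u : Fin 3 → ℝ) : Cl3 := ⟨0, fun i => (u i : ℂ), 0, 0⟩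

/-- The grade involution `ŵ`: negation of the vector (degree-1) and 3-vector
(degree-3) parts. -/
def gradeInv (w : Cl3) : Cl3 := ⟨w.α, -w.a, w.b, -w.β⟩

/-- Exterior product of a complex vector with a multivector:
`u ∧ w = uα + *(u×a) + *(u·b)` for `w = α + a + *b + *β`. -/
def wedgeC (u : Fin 3 → ℂ) (w : Cl3) : Cl3 := ⟨0, w.α • u, ccross u w.a, cdot u w.b⟩

/-- Exterior product of a real vector with a multivector. -/
def wedgeVec (u : Fin 3 → ℝ) (w : Cl3) : Cl3 := wedgeC (fun i => (u i : ℂ)) w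

/-- Partial derivative `∂ᵢ f` of a complex-valued function on `ℝ³`. -/
def pdC (i : Fin 3) (f : (Fin 3 → ℝ) → ℂ) (x : Fin 3 → ℝ) : ℂ :=
  fderiv ℝ f x (Pi.single i 1)

/-- Componentwise partial derivative `∂ᵢ F` of a multivector field. -/
def pdCl (i : Fin 3) (F : (Fin 3 → ℝ) → Cl3) (x : Fin 3 → ℝ) : Cl3 :=
  ⟨pdC i (fun y => (F y).α) x, fun j => pdC i (fun y => (F y).a j) x,
   fun j => pdC i (fun y => (F y).b j) x, pdC i (fun y => (F y).β) x⟩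

/-- The standard basis vector `eᵢ` of `ℝ³`. -/
def basisVec (i : Fin 3) : Fin 3 → ℝ := Pi.single i 1

/-- The Hodge–Dirac operator `D F = e₁ ∂₁F + e₂ ∂₂F + e₃ ∂₃F`, the nabla
symbol acting via the Clifford product. -/
def Dirac (F : (Fin 3 → ℝ) → Cl3) (x : Fin 3 → ℝ) : Cl3 :=
  vec (basisVec 0) * pdCl 0 F x + vec (basisVec 1) * pdCl 1 F x
    + vec (basisVec 2) * pdCl 2 F x

/-- The exterior derivative `d F = e₁ ∧ ∂₁F + e₂ ∧ ∂₂F + e₃ ∧ ∂₃F`, the nabla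
symbol acting via the exterior product. -/
def extDerivCl (F : (Fin 3 → ℝ) → Cl3) (x : Fin 3 → ℝ) : Cl3 :=
  wedgeVec (basisVec 0) (pdCl 0 F x) + wedgeVec (basisVec 1) (pdCl 1 F x)
    + wedgeVec (basisVec 2) (pdCl 2 F x)

/-- Divergence `∇·v` of a complex vector field on `ℝ³`. -/
def divC (v : (Fin 3 → ℝ) → Fin 3 → ℂ) (x : Fin 3 → ℝ) : ℂ :=
  pdC 0 (fun y => v y 0) x + pdC 1 (fun y => v y 1) x + pdC 2 (fun y => v y 2) x

/-- Curl `∇×v` of a complex vector field on `ℝ³`. -/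
def curlC (v : (Fin 3 → ℝ) → Fin 3 → ℂ) (x : Fin 3 → ℝ) : Fin 3 → ℂ :=
  ![pdC 1 (fun y => v y 2) x - pdC 2 (fun y => v y 1) x,
    pdC 2 (fun y => v y 0) x - pdC 0 (fun y => v y 2) x,
    pdC 0 (fun y => v y 1) x - pdC 1 (fun y => v y 0) x]

/-- Gradient `∇f` of a complex-valued function on `ℝ³`. -/
def gradC (f : (Fin 3 → ℝ) → ℂ) (x : Fin 3 → ℝ) : Fin 3 → ℂ :=
  fun i => pdC i f x

section Aux

lemma Cl3.ext' {x y : Cl3} (h1 : x.α = y.α) (h2 : x.a = y.a)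
    (h3 : x.b = y.b) (h4 : x.β = y.β) : x = y := by
  cases x; cases y; simp_all

@[simp] lemma Cl3.mul_α (x y : Cl3) : (x * y).α
    = x.α * y.α + cdot x.a y.a - cdot x.b y.b - x.β * y.β := rfl
@[simp] lemma Cl3.mul_a (x y : Cl3) : (x * y).a
    = x.α • y.a + y.α • x.a - ccross x.a y.b - ccross x.b y.a - y.β • x.b - x.β • y.b := rfl
@[simp] lemma Cl3.mul_b (x y : Cl3) : (x * y).b
    = x.α • y.b + y.α • x.b + ccross x.a y.a - ccross x.b y.b + x.β • y.a + y.β • x.a := rfl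
@[simp] lemma Cl3.mul_β (x y : Cl3) : (x * y).β
    = x.α * y.β + x.β * y.α + cdot x.a y.b + cdot x.b y.a := rfl
@[simp] lemma Cl3.add_α (x y : Cl3) : (x + y).α = x.α + y.α := rfl
@[simp] lemma Cl3.add_a (x y : Cl3) : (x + y).a = x.a + y.a := rfl
@[simp] lemma Cl3.add_b (x y : Cl3) : (x + y).b = x.b + y.b := rfl
@[simp] lemma Cl3.add_β (x y : Cl3) : (x + y).β = x.β + y.β := rfl
@[simp] lemma Cl3.smul_α (c : ℂ) (x : Cl3) : (c • x).α = c * x.α := rfl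
@[simp] lemma Cl3.smul_a (c : ℂ) (x : Cl3) : (c • x).a = c • x.a := rfl
@[simp] lemma Cl3.smul_b (c : ℂ) (x : Cl3) : (c • x).b = c • x.b := rfl
@[simp] lemma Cl3.smul_β (c : ℂ) (x : Cl3) : (c • x).β = c * x.β := rfl
@[simp] lemma pdCl_α (i F x) : (pdCl i F x).α = pdC i (fun y => (F y).α) x := rfl
@[simp] lemma pdCl_a (i F x j) : (pdCl i F x).a j = pdC i (fun y => (F y).a j) x := rfl
@[simp] lemma pdCl_b (i F x j) : (pdCl i F x).b j = pdC i (fun y => (F y).b j) x := rfl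
@[simp] lemma pdCl_β (i F x) : (pdCl i F x).β = pdC i (fun y => (F y).β) x := rfl
@[simp] lemma vec_α (u) : (vec u).α = 0 := rfl
@[simp] lemma vec_a (u j) : (vec u).a j = (u j : ℂ) := rfl
@[simp] lemma vec_b (u) : (vec u).b = 0 := rfl
@[simp] lemma vec_β (u) : (vec u).β = 0 := rfl

lemma dirac_eq (F : (Fin 3 → ℝ) → Cl3) (x : Fin 3 → ℝ) :
    Dirac F x = ⟨divC (fun y => (F y).a) x,
      fun j => gradC (fun y => (F y).α) x j - curlC (fun y => (F y).b) x j,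
      fun j => curlC (fun y => (F y).a) x j + gradC (fun y => (F y).β) x j,
      divC (fun y => (F y).b) x⟩ := by
  apply Cl3.ext'
  · simp [Dirac, divC, cdot, basisVec, Pi.single_apply]
  · funext j; fin_cases j <;>
      simp [Dirac, gradC, curlC, ccross, basisVec, Pi.single_apply, Fin.ext_iff, Matrix.vecHead, Matrix.vecTail, Pi.smul_apply, smul_eq_mul] <;> ring
  · funext j; fin_cases j <;>
      simp [Dirac, gradC, curlC, ccross, basisVec, Pi.single_apply, Fin.ext_iff, Matrix.vecHead, Matrix.vecTail, Pi.smul_apply, smul_eq_mul] <;> ring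
  · simp [Dirac, divC, cdot, basisVec, Pi.single_apply]

lemma extDeriv_eq (F : (Fin 3 → ℝ) → Cl3) (x : Fin 3 → ℝ) :
    extDerivCl F x = ⟨0, gradC (fun y => (F y).α) x,
      curlC (fun y => (F y).a) x, divC (fun y => (F y).b) x⟩ := by
  apply Cl3.ext'
  · simp [extDerivCl, wedgeVec, wedgeC]
  · funext j; fin_cases j <;>
      simp [extDerivCl, wedgeVec, wedgeC, gradC, basisVec, Pi.single_apply, Fin.ext_iff, Matrix.vecHead, Matrix.vecTail, Pi.smul_apply, smul_eq_mul, -Fin.val_eq_zero_iff]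
  · funext j; fin_cases j <;>
      simp [extDerivCl, wedgeVec, wedgeC, curlC, ccross, basisVec, Pi.single_apply, Fin.ext_iff, Matrix.vecHead, Matrix.vecTail, Pi.smul_apply, smul_eq_mul, -Fin.val_eq_zero_iff]
      <;> ring
  · simp [extDerivCl, wedgeVec, wedgeC, divC, cdot, basisVec, Pi.single_apply]

end Aux

/-- Let `F = α + a + *b + *β` be a `C¹` multivector field on an open
`Ω ⊆ ℝ³` satisfying the Dirac equation `D F = ik F` (`k ≠ 0`). Then the
scalar and 3-vector parts vanish identically on `Ω` if and only if
`d F = ik T⁺F` on `Ω`, where `T⁺F = ½(F + F̂)` is the even-grade part. -/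
theorem maxwell_constraint (Ω : Set (Fin 3 → ℝ)) (hΩ : IsOpen Ω)
    (k : ℂ) (hk : k ≠ 0) (F : (Fin 3 → ℝ) → Cl3)
    (hreg : ∀ x ∈ Ω, DifferentiableAt ℝ (fun y => (F y).α) x ∧
        (∀ j, DifferentiableAt ℝ (fun y => (F y).a j) x) ∧
        (∀ j, DifferentiableAt ℝ (fun y => (F y).b j) x) ∧
        DifferentiableAt ℝ (fun y => (F y).β) x)
    (hdirac : ∀ x ∈ Ω, Dirac F x = (Complex.I * k) • F x) :
    (∀ x ∈ Ω, (F x).α = 0 ∧ (F x).β = 0) ↔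
    (∀ x ∈ Ω, extDerivCl F x
        = (Complex.I * k) • ((1 / 2 : ℂ) • (F x + gradeInv (F x)))) := by
  have hIk : Complex.I * k ≠ 0 := mul_ne_zero Complex.I_ne_zero hk
  constructor
  · intro h x hx
    have hd := hdirac x hx
    rw [dirac_eq] at hd
    have hα0 : ∀ i, pdC i (fun y => (F y).α) x = 0 := by
      intro i
      have he : (fun y => (F y).α) =ᶠ[nhds x] fun _ => (0:ℂ) :=
        Filter.eventually_of_mem (hΩ.mem_nhds hx) (fun y hy => (h y hy).1)
      unfold pdC
      rw [he.fderiv_eq]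
      simp
    have hβ0 : ∀ i, pdC i (fun y => (F y).β) x = 0 := by
      intro i
      have he : (fun y => (F y).β) =ᶠ[nhds x] fun _ => (0:ℂ) :=
        Filter.eventually_of_mem (hΩ.mem_nhds hx) (fun y hy => (h y hy).2)
      unfold pdC
      rw [he.fderiv_eq]
      simp
    rw [extDeriv_eq]
    apply Cl3.ext'
    · simp [gradeInv, (h x hx).1]
    · funext i
      simp [gradeInv, gradC, hα0 i]
    · funext i
      have hb := congrFun (congrArg Cl3.b hd) i
      simp [gradC, hβ0 i] at hb
      simp [gradeInv]
      rw [hb]; ring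
    · have hβ := congrArg Cl3.β hd
      simp [(h x hx).2] at hβ
      simpa [gradeInv] using hβ
  · intro h x hx
    have hd := hdirac x hx
    rw [dirac_eq] at hd
    have he := h x hx
    rw [extDeriv_eq] at he
    constructor
    · have hα := congrArg Cl3.α he
      simp only [gradeInv, Cl3.smul_α, Cl3.add_α] at hα
      have : Complex.I * k * (F x).α = 0 := by linear_combination -hα
      exact (mul_eq_zero.1 this).resolve_left hIk
    · have h1 := congrArg Cl3.β he
      have h2 := congrArg Cl3.β hd
      simp only [gradeInv, Cl3.smul_β, Cl3.add_β] at h1 h2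
      have : Complex.I * k * (F x).β = 0 := by rw [← h2, h1]; ring
      exact (mul_eq_zero.1 this).resolve_left hIk
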